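/- With notation as in the previous convergence result and δ ≠ d, the limit Φ = lim Φ_n satisfies ‖Φ - id‖ < max{ 1/(δ-1), 1/(d-1) + (γ/(δ-d))(1/(d-1) - 1/(δ-1)) } · ε̃ on V; if δ = d, then ‖Φ - id‖ < (1/(d-1) + γ/(d-1)^2) · ε̃. -/

import Mathlib

lemma geo_aux1 (q : ℝ) (h0 : 0 ≤ q) (h1 : q < 1) (n : ℕ) :
    ∑ i ∈ Finset.range n, q ^ i ≤ 1 / (1 - q) := by
  induction n with
  | zero => simp; linarith
  | succ k ih =>
    rw [Finset.sum_range_succ' (fun i => q ^ i) k]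
    have : ∑ i ∈ Finset.range k, q ^ (i + 1) = q * ∑ i ∈ Finset.range k, q ^ i := by
      rw [Finset.mul_sum]; exact Finset.sum_congr rfl (fun i _ => by ring)
    rw [this]
    have h1q : 0 < 1 - q := by linarith
    have := mul_le_mul_of_nonneg_left ih h0
    rw [pow_zero]
    rw [div_eq_mul_inv] at *
    nlinarith [mul_inv_cancel₀ (ne_of_gt h1q)]

lemma geo_aux2 (r : ℝ) (hr : 2 ≤ r) (n : ℕ) :
    ∑ k ∈ Finset.range n, (1 / r) ^ (k + 1) ≤ 1 / (r - 1) := by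
  have hr0 : 0 < r := by linarith
  have h0 : 0 ≤ 1 / r := by positivity
  have h1 : 1 / r < 1 := by rw [div_lt_one hr0]; linarith
  have : ∑ k ∈ Finset.range n, (1 / r) ^ (k + 1) = (1/r) * ∑ k ∈ Finset.range n, (1/r) ^ k := by
    rw [Finset.mul_sum]; exact Finset.sum_congr rfl (fun i _ => by ring)
  rw [this]
  have := geo_aux1 (1/r) h0 h1 n
  have key : (1/r) * (1/(1 - 1/r)) = 1/(r-1) := by
    rw [one_sub_div (ne_of_gt hr0)]
    field_simp
  calc (1/r) * ∑ k ∈ Finset.range n, (1/r) ^ k ≤ (1/r) * (1/(1-1/r)) :=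
        mul_le_mul_of_nonneg_left this h0
    _ = 1/(r-1) := key

set_option maxHeartbeats 1000000 in
theorem stmt12
    (δ d γ : ℕ) (hδ : 2 ≤ δ) (hd : 2 ≤ d)
    (ε : ℝ) (hε : 0 < ε)
    (F : ℂ × ℂ → ℂ × ℂ) (V : Set (ℂ × ℂ))
    (hinv : Set.MapsTo F V V)
    (hclose : ∀ x ∈ V, ‖(F x).1 - (δ : ℂ) * x.1‖ < ε ∧
      ‖(F x).2 - ((γ : ℂ) * x.1 + (d : ℂ) * x.2)‖ < ε)
    (gam : ℕ → ℕ) (hgam : ∀ n, gam n = ∑ j ∈ Finset.range n, δ ^ (n - 1 - j) * d ^ j * γ)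
    (Φ : ℕ → ℂ × ℂ → ℂ × ℂ)
    (hΦ : ∀ n x, Φ n x = ((F^[n] x).1 / (δ : ℂ) ^ n,
      (F^[n] x).2 / (d : ℂ) ^ n - (gam n : ℂ) * (F^[n] x).1 / ((δ : ℂ) ^ n * (d : ℂ) ^ n)))
    (Φlim : ℂ × ℂ → ℂ × ℂ)
    (hlim : ∀ x ∈ V, Filter.Tendsto (fun n => Φ n x) Filter.atTop (nhds (Φlim x))) :
    (δ ≠ d → ∀ x ∈ V,
      max ‖(Φlim x).1 - x.1‖ ‖(Φlim x).2 - x.2‖ <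
        max (1 / ((δ : ℝ) - 1))
          (1 / ((d : ℝ) - 1) + (γ : ℝ) / ((δ : ℝ) - (d : ℝ)) *
            (1 / ((d : ℝ) - 1) - 1 / ((δ : ℝ) - 1))) * ε) ∧
    (δ = d → ∀ x ∈ V,
      max ‖(Φlim x).1 - x.1‖ ‖(Φlim x).2 - x.2‖ <
        (1 / ((d : ℝ) - 1) + (γ : ℝ) / ((d : ℝ) - 1) ^ 2) * ε) := by
  have hδR : (2:ℝ) ≤ (δ:ℝ) := by exact_mod_cast hδ
  have hdR : (2:ℝ) ≤ (d:ℝ) := by exact_mod_cast hd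
  have hδ0 : (0:ℝ) < (δ:ℝ) := by linarith
  have hd0 : (0:ℝ) < (d:ℝ) := by linarith
  have hδ1 : (0:ℝ) < (δ:ℝ) - 1 := by linarith
  have hd1 : (0:ℝ) < (d:ℝ) - 1 := by linarith
  have hδC : (δ:ℂ) ≠ 0 := Nat.cast_ne_zero.2 (by omega)
  have hdC : (d:ℂ) ≠ 0 := Nat.cast_ne_zero.2 (by omega)
  have hγ0 : (0:ℝ) ≤ (γ:ℝ) := Nat.cast_nonneg γ
  -- gam facts
  have hgam0 : gam 0 = 0 := by rw [hgam]; simp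
  have hgam1 : gam 1 = γ := by rw [hgam]; simp
  have hrec : ∀ n, gam (n+1) = d * gam n + δ ^ n * γ := by
    intro n
    rw [hgam, hgam, Finset.sum_range_succ']
    have h1 : ∀ j ∈ Finset.range n,
        δ ^ (n + 1 - 1 - (j+1)) * d ^ (j+1) * γ = d * (δ ^ (n - 1 - j) * d ^ j * γ) := by
      intro j hj
      have : n + 1 - 1 - (j+1) = n - 1 - j := by omega
      rw [this]; ring
    rw [Finset.sum_congr rfl h1, ← Finset.mul_sum]
    simp
  -- G and its sum bound
  set G : ℕ → ℝ := fun m => (gam m : ℝ) / ((δ:ℝ) ^ m * (d:ℝ) ^ m) with hGdef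
  have hGnn : ∀ m, 0 ≤ G m := by intro m; apply div_nonneg (Nat.cast_nonneg _); positivity
  have hG0 : G 0 = 0 := by simp [hGdef, hgam0]
  have hG1 : G 1 = (γ:ℝ) / ((δ:ℝ) * (d:ℝ)) := by simp [hGdef, hgam1]
  have hGrec : ∀ m, G (m+1) = (1/(δ:ℝ)) * G m + ((γ:ℝ)/(δ:ℝ)) * (1/(d:ℝ)) ^ (m+1) := by
    intro m
    simp only [hGdef]
    rw [hrec m]
    push_cast
    rw [one_div_pow]
    field_simp
    ring
  have hP : ∀ n, ∑ m ∈ Finset.range n, G (m+1) ≤ (γ:ℝ) / (((δ:ℝ)-1) * ((d:ℝ)-1)) := by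
    intro n
    have h1 : ∑ m ∈ Finset.range n, G (m+1)
        = (1/(δ:ℝ)) * ∑ m ∈ Finset.range n, G m
          + ((γ:ℝ)/(δ:ℝ)) * ∑ m ∈ Finset.range n, (1/(d:ℝ)) ^ (m+1) := by
      rw [Finset.mul_sum, Finset.mul_sum, ← Finset.sum_add_distrib]
      exact Finset.sum_congr rfl (fun m _ => hGrec m)
    have h2 : ∑ m ∈ Finset.range n, G m ≤ ∑ m ∈ Finset.range n, G (m+1) := by
      cases n with
      | zero => simp
      | succ k =>
        rw [Finset.sum_range_succ' G k, hG0, add_zero]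
        apply Finset.sum_le_sum_of_subset_of_nonneg
          (Finset.range_subset_range.2 (Nat.le_succ k))
        intro i _ _; exact hGnn _
      -- done
    have h3 : ∑ m ∈ Finset.range n, (1/(d:ℝ)) ^ (m+1) ≤ 1/((d:ℝ)-1) := geo_aux2 _ hdR n
    set P := ∑ m ∈ Finset.range n, G (m+1) with hPdef
    have hkey : P ≤ (1/(δ:ℝ)) * P + ((γ:ℝ)/(δ:ℝ)) * (1/((d:ℝ)-1)) := by
      calc P = (1/(δ:ℝ)) * ∑ m ∈ Finset.range n, G m
          + ((γ:ℝ)/(δ:ℝ)) * ∑ m ∈ Finset.range n, (1/(d:ℝ)) ^ (m+1) := h1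
        _ ≤ (1/(δ:ℝ)) * P + ((γ:ℝ)/(δ:ℝ)) * (1/((d:ℝ)-1)) := by
            apply add_le_add
            · exact mul_le_mul_of_nonneg_left h2 (by positivity)
            · exact mul_le_mul_of_nonneg_left h3 (by positivity)
    have hmul := mul_le_mul_of_nonneg_left hkey (le_of_lt (mul_pos hδ0 hd1))
    have hsimp : ((δ:ℝ) * ((d:ℝ)-1)) * ((1/(δ:ℝ)) * P + ((γ:ℝ)/(δ:ℝ)) * (1/((d:ℝ)-1)))
        = ((d:ℝ)-1) * P + (γ:ℝ) := by
      field_simp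
    rw [hsimp] at hmul
    rw [le_div_iff₀ (by positivity)]
    nlinarith [hmul]
  -- main claim
  have main : ∀ x ∈ V, max ‖(Φlim x).1 - x.1‖ ‖(Φlim x).2 - x.2‖ <
      max (1/((δ:ℝ)-1)) (1/((d:ℝ)-1) + (γ:ℝ)/(((δ:ℝ)-1)*((d:ℝ)-1))) * ε := by
    intro x hx
    have hy : ∀ k, F^[k] x ∈ V := by
      intro k
      induction k with
      | zero => simpa using hx
      | succ k ih => rw [Function.iterate_succ_apply']; exact hinv ih
    set E1 : ℕ → ℝ := fun k => ‖(F (F^[k] x)).1 - (δ:ℂ) * (F^[k] x).1‖ with hE1def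
    set E2 : ℕ → ℝ := fun k =>
      ‖(F (F^[k] x)).2 - ((γ:ℂ) * (F^[k] x).1 + (d:ℂ) * (F^[k] x).2)‖ with hE2def
    have hE1 : ∀ k, E1 k < ε := fun k => (hclose _ (hy k)).1
    have hE2 : ∀ k, E2 k < ε := fun k => (hclose _ (hy k)).2
    have hE1nn : ∀ k, 0 ≤ E1 k := fun k => norm_nonneg _
    have hE2nn : ∀ k, 0 ≤ E2 k := fun k => norm_nonneg _
    have hnormδ : ∀ n : ℕ, ‖((δ:ℂ))^n‖ = ((δ:ℝ))^n := by
      intro n; rw [norm_pow, Complex.norm_natCast]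
    have hnormd : ∀ n : ℕ, ‖((d:ℂ))^n‖ = ((d:ℝ))^n := by
      intro n; rw [norm_pow, Complex.norm_natCast]
    -- first-component telescoping
    have step1 : ∀ n, ‖(Φ (n+1) x).1 - (Φ n x).1‖ = E1 n / (δ:ℝ)^(n+1) := by
      intro n
      rw [hΦ, hΦ]
      simp only [Function.iterate_succ_apply']
      have hid : (F (F^[n] x)).1 / (δ:ℂ)^(n+1) - (F^[n] x).1 / (δ:ℂ)^n
          = ((F (F^[n] x)).1 - (δ:ℂ) * (F^[n] x).1) / (δ:ℂ)^(n+1) := by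
        field_simp
        ring
      rw [hid, norm_div, hnormδ]
    -- second-component telescoping
    have step2 : ∀ n, ‖(Φ (n+1) x).2 - (Φ n x).2‖ ≤
        E2 n / (d:ℝ)^(n+1) + (gam (n+1) : ℝ) * E1 n / ((δ:ℝ)^(n+1) * (d:ℝ)^(n+1)) := by
      intro n
      rw [hΦ, hΦ]
      simp only [Function.iterate_succ_apply']
      set y := F^[n] x with hy0
      have hrecC : (gam (n+1) : ℂ) = (d:ℂ) * (gam n : ℂ) + (δ:ℂ)^n * (γ:ℂ) := by
        rw [hrec n]; push_cast; ring
      have hP : (δ:ℂ)^n ≠ 0 := pow_ne_zero _ hδC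
      have hQ : (d:ℂ)^n ≠ 0 := pow_ne_zero _ hdC
      have hid : ((F y).2 / (d:ℂ)^(n+1) - (gam (n+1) : ℂ) * (F y).1 / ((δ:ℂ)^(n+1) * (d:ℂ)^(n+1)))
          - (y.2 / (d:ℂ)^n - (gam n : ℂ) * y.1 / ((δ:ℂ)^n * (d:ℂ)^n))
          = ((F y).2 - ((γ:ℂ) * y.1 + (d:ℂ) * y.2)) / (d:ℂ)^(n+1)
            - (gam (n+1) : ℂ) * ((F y).1 - (δ:ℂ) * y.1) / ((δ:ℂ)^(n+1) * (d:ℂ)^(n+1)) := by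
        simp only [pow_succ]
        rw [hrecC]
        rw [div_sub_div _ _ (by simp [hP,hQ,hδC,hdC]) (by simp [hP,hQ,hδC,hdC] :
              ((δ:ℂ)^n*(δ:ℂ))*((d:ℂ)^n*(d:ℂ)) ≠ 0),
            div_sub_div _ _ hQ (by simp [hP,hQ] : (δ:ℂ)^n*(d:ℂ)^n ≠ 0),
            div_sub_div _ _ (by simp [hP,hQ,hδC,hdC]) (by simp [hP,hQ,hδC,hdC]),
            div_sub_div _ _ (by simp [hP,hQ,hδC,hdC]) (by simp [hP,hQ,hδC,hdC] :
              ((δ:ℂ)^n*(δ:ℂ))*((d:ℂ)^n*(d:ℂ)) ≠ 0),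
            div_eq_div_iff (by simp [hP,hQ,hδC,hdC]) (by simp [hP,hQ,hδC,hdC])]
        ring
      rw [hid]
      refine (norm_sub_le _ _).trans ?_
      rw [norm_div, norm_div, norm_mul, hnormd, norm_mul, hnormδ, hnormd,
        Complex.norm_natCast]
    -- partial-sum bounds on Φ n x - x
    have claimA : ∀ n, ‖(Φ n x).1 - x.1‖ ≤ ∑ k ∈ Finset.range n, E1 k / (δ:ℝ)^(k+1) := by
      intro n
      induction n with
      | zero => simp [hΦ]
      | succ n ih =>
        rw [Finset.sum_range_succ]
        calc ‖(Φ (n+1) x).1 - x.1‖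
            ≤ ‖(Φ n x).1 - x.1‖ + ‖(Φ (n+1) x).1 - (Φ n x).1‖ := by
              have := norm_add_le ((Φ n x).1 - x.1) ((Φ (n+1) x).1 - (Φ n x).1)
              simpa [sub_add_sub_cancel'] using this
          _ ≤ (∑ k ∈ Finset.range n, E1 k / (δ:ℝ)^(k+1)) + E1 n / (δ:ℝ)^(n+1) := by
              exact add_le_add ih (le_of_eq (step1 n))
    have claimB : ∀ n, ‖(Φ n x).2 - x.2‖ ≤ ∑ k ∈ Finset.range n,
        (E2 k / (d:ℝ)^(k+1) + (gam (k+1) : ℝ) * E1 k / ((δ:ℝ)^(k+1) * (d:ℝ)^(k+1))) := by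
      intro n
      induction n with
      | zero => simp [hΦ, hgam0]
      | succ n ih =>
        rw [Finset.sum_range_succ]
        calc ‖(Φ (n+1) x).2 - x.2‖
            ≤ ‖(Φ n x).2 - x.2‖ + ‖(Φ (n+1) x).2 - (Φ n x).2‖ := by
              have := norm_add_le ((Φ n x).2 - x.2) ((Φ (n+1) x).2 - (Φ n x).2)
              simpa [sub_add_sub_cancel'] using this
          _ ≤ _ := add_le_add ih (step2 n)
    -- bound the partial sums
    have hgeδ : 1/(δ:ℝ) ≤ 1/((δ:ℝ)-1) := one_div_le_one_div_of_le hδ1 (by linarith)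
    have hged : 1/(d:ℝ) ≤ 1/((d:ℝ)-1) := one_div_le_one_div_of_le hd1 (by linarith)
    have hgG : (γ:ℝ)/((δ:ℝ)*(d:ℝ)) ≤ (γ:ℝ)/(((δ:ℝ)-1)*((d:ℝ)-1)) := by
      apply div_le_div_of_nonneg_left hγ0 (mul_pos hδ1 hd1)
      nlinarith
    set B1 : ℝ := E1 0/(δ:ℝ) + (1/((δ:ℝ)-1) - 1/(δ:ℝ))*ε with hB1def
    set B2 : ℝ := E2 0/(d:ℝ) + (γ:ℝ)*E1 0/((δ:ℝ)*(d:ℝ))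
      + ((1/((d:ℝ)-1) - 1/(d:ℝ))
        + ((γ:ℝ)/(((δ:ℝ)-1)*((d:ℝ)-1)) - (γ:ℝ)/((δ:ℝ)*(d:ℝ))))*ε with hB2def
    have hgeo2δ : ∀ m : ℕ, ∑ k ∈ Finset.range m, (1/(δ:ℝ))^(k+2) ≤ 1/((δ:ℝ)-1) - 1/(δ:ℝ) := by
      intro m
      have e : ∑ k ∈ Finset.range m, (1/(δ:ℝ))^(k+2)
          = (1/(δ:ℝ)) * ∑ k ∈ Finset.range m, (1/(δ:ℝ))^(k+1) := by
        rw [Finset.mul_sum]; exact Finset.sum_congr rfl (fun k _ => by ring)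
      rw [e]
      have h2 := geo_aux2 (δ:ℝ) hδR m
      have h3 := mul_le_mul_of_nonneg_left h2 (by positivity : (0:ℝ) ≤ 1/(δ:ℝ))
      have e2 : (1/(δ:ℝ))*(1/((δ:ℝ)-1)) = 1/((δ:ℝ)-1) - 1/(δ:ℝ) := by
        rw [div_sub_div _ _ (ne_of_gt hδ1) (ne_of_gt hδ0), div_mul_div_comm]
        congr 1 <;> ring
      linarith
    have hgeo2d : ∀ m : ℕ, ∑ k ∈ Finset.range m, (1/(d:ℝ))^(k+2) ≤ 1/((d:ℝ)-1) - 1/(d:ℝ) := by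
      intro m
      have e : ∑ k ∈ Finset.range m, (1/(d:ℝ))^(k+2)
          = (1/(d:ℝ)) * ∑ k ∈ Finset.range m, (1/(d:ℝ))^(k+1) := by
        rw [Finset.mul_sum]; exact Finset.sum_congr rfl (fun k _ => by ring)
      rw [e]
      have h2 := geo_aux2 (d:ℝ) hdR m
      have h3 := mul_le_mul_of_nonneg_left h2 (by positivity : (0:ℝ) ≤ 1/(d:ℝ))
      have e2 : (1/(d:ℝ))*(1/((d:ℝ)-1)) = 1/((d:ℝ)-1) - 1/(d:ℝ) := by
        rw [div_sub_div _ _ (ne_of_gt hd1) (ne_of_gt hd0), div_mul_div_comm]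
        congr 1 <;> ring
      linarith
    have hGtail : ∀ m : ℕ, ∑ k ∈ Finset.range m, G (k+2)
        ≤ (γ:ℝ)/(((δ:ℝ)-1)*((d:ℝ)-1)) - (γ:ℝ)/((δ:ℝ)*(d:ℝ)) := by
      intro m
      have h := hP (m+1)
      rw [Finset.sum_range_succ' (fun k => G (k+1)) m] at h
      rw [hG1] at h
      linarith
    have hA : ∀ n, ∑ k ∈ Finset.range n, E1 k/(δ:ℝ)^(k+1) ≤ B1 := by
      intro n
      cases n with
      | zero =>
        simp only [Finset.range_zero, Finset.sum_empty]
        rw [hB1def]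
        have h1 : (0:ℝ) ≤ E1 0/(δ:ℝ) := by positivity
        have h2 : (0:ℝ) ≤ (1/((δ:ℝ)-1) - 1/(δ:ℝ))*ε := mul_nonneg (by linarith) hε.le
        linarith
      | succ m =>
        rw [Finset.sum_range_succ' (fun k => E1 k/(δ:ℝ)^(k+1)) m]
        have h1 : ∑ k ∈ Finset.range m, E1 (k+1)/(δ:ℝ)^(k+1+1)
            ≤ ∑ k ∈ Finset.range m, ε * (1/(δ:ℝ))^(k+2) := by
          apply Finset.sum_le_sum
          intro k _
          have he : ε * (1/(δ:ℝ))^(k+2) = ε / (δ:ℝ)^(k+2) := by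
            rw [one_div, inv_pow, div_eq_mul_inv]
          rw [he]
          gcongr
          exact (hE1 (k+1)).le
        rw [← Finset.mul_sum] at h1
        have h2 := hgeo2δ m
        have h3 : ε * ∑ k ∈ Finset.range m, (1/(δ:ℝ))^(k+2)
            ≤ ε * (1/((δ:ℝ)-1) - 1/(δ:ℝ)) := mul_le_mul_of_nonneg_left h2 hε.le
        have h4 : E1 0/(δ:ℝ)^(0+1) = E1 0/(δ:ℝ) := by norm_num
        rw [h4, hB1def]
        have := h1.trans h3
        linarith
    have hB : ∀ n, ∑ k ∈ Finset.range n,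
        (E2 k / (d:ℝ)^(k+1) + (gam (k+1) : ℝ) * E1 k / ((δ:ℝ)^(k+1) * (d:ℝ)^(k+1))) ≤ B2 := by
      intro n
      cases n with
      | zero =>
        simp only [Finset.range_zero, Finset.sum_empty]
        rw [hB2def]
        have h1 : (0:ℝ) ≤ E2 0/(d:ℝ) := by positivity
        have h2 : (0:ℝ) ≤ (γ:ℝ)*E1 0/((δ:ℝ)*(d:ℝ)) := by positivity
        have h3 : (0:ℝ) ≤ ((1/((d:ℝ)-1) - 1/(d:ℝ))
            + ((γ:ℝ)/(((δ:ℝ)-1)*((d:ℝ)-1)) - (γ:ℝ)/((δ:ℝ)*(d:ℝ))))*ε :=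
          mul_nonneg (by linarith) hε.le
        linarith
      | succ m =>
        rw [Finset.sum_range_succ'
          (fun k => E2 k / (d:ℝ)^(k+1) + (gam (k+1) : ℝ) * E1 k / ((δ:ℝ)^(k+1) * (d:ℝ)^(k+1))) m]
        have hfirst : E2 0 / (d:ℝ)^(0+1) + (gam (0+1) : ℝ) * E1 0 / ((δ:ℝ)^(0+1) * (d:ℝ)^(0+1))
            = E2 0/(d:ℝ) + (γ:ℝ)*E1 0/((δ:ℝ)*(d:ℝ)) := by
          rw [hgam1]; norm_num
        have hsplit : ∑ k ∈ Finset.range m,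
            (E2 (k+1) / (d:ℝ)^(k+1+1) + (gam (k+1+1) : ℝ) * E1 (k+1) / ((δ:ℝ)^(k+1+1) * (d:ℝ)^(k+1+1)))
            = (∑ k ∈ Finset.range m, E2 (k+1) / (d:ℝ)^(k+1+1))
              + ∑ k ∈ Finset.range m, (gam (k+1+1) : ℝ) * E1 (k+1) / ((δ:ℝ)^(k+1+1) * (d:ℝ)^(k+1+1)) :=
          Finset.sum_add_distrib
        have h1a : ∑ k ∈ Finset.range m, E2 (k+1) / (d:ℝ)^(k+1+1)
            ≤ ε * ∑ k ∈ Finset.range m, (1/(d:ℝ))^(k+2) := by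
          rw [Finset.mul_sum]
          apply Finset.sum_le_sum
          intro k _
          have he : ε * (1/(d:ℝ))^(k+2) = ε / (d:ℝ)^(k+2) := by
            rw [one_div, inv_pow, div_eq_mul_inv]
          rw [he]
          gcongr
          exact (hE2 (k+1)).le
        have h1b : ∑ k ∈ Finset.range m, (gam (k+1+1) : ℝ) * E1 (k+1) / ((δ:ℝ)^(k+1+1) * (d:ℝ)^(k+1+1))
            ≤ ε * ∑ k ∈ Finset.range m, G (k+2) := by
          rw [Finset.mul_sum]
          apply Finset.sum_le_sum
          intro k _
          have he : ε * G (k+2) = (gam (k+2) : ℝ) * ε / ((δ:ℝ)^(k+2) * (d:ℝ)^(k+2)) := by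
            simp only [hGdef]; ring
          rw [he]
          gcongr
          exact (hE1 (k+1)).le
        have h2 := hgeo2d m
        have h3 := hGtail m
        have h4 : ε * ∑ k ∈ Finset.range m, (1/(d:ℝ))^(k+2)
            + ε * ∑ k ∈ Finset.range m, G (k+2)
            ≤ ε * (1/((d:ℝ)-1) - 1/(d:ℝ))
              + ε * ((γ:ℝ)/(((δ:ℝ)-1)*((d:ℝ)-1)) - (γ:ℝ)/((δ:ℝ)*(d:ℝ))) := by
          exact add_le_add (mul_le_mul_of_nonneg_left h2 hε.le)
            (mul_le_mul_of_nonneg_left h3 hε.le)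
        rw [hfirst, hB2def]
        have h5 := (hsplit.le.trans (add_le_add h1a h1b)).trans h4
        linarith
    -- strict bounds
    have hB1lt : B1 < (1/((δ:ℝ)-1))*ε := by
      have h1 : E1 0/(δ:ℝ) < ε/(δ:ℝ) := by gcongr; exact hE1 0
      have e : ε/(δ:ℝ) + (1/((δ:ℝ)-1) - 1/(δ:ℝ))*ε = (1/((δ:ℝ)-1))*ε := by ring
      rw [hB1def]
      linarith
    have hB2lt : B2 < (1/((d:ℝ)-1) + (γ:ℝ)/(((δ:ℝ)-1)*((d:ℝ)-1)))*ε := by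
      have h1 : E2 0/(d:ℝ) < ε/(d:ℝ) := by gcongr; exact hE2 0
      have h2 : (γ:ℝ)*E1 0/((δ:ℝ)*(d:ℝ)) ≤ (γ:ℝ)*ε/((δ:ℝ)*(d:ℝ)) := by
        gcongr
        exact (hE1 0).le
      have e : ε/(d:ℝ) + (γ:ℝ)*ε/((δ:ℝ)*(d:ℝ))
          + ((1/((d:ℝ)-1) - 1/(d:ℝ))
            + ((γ:ℝ)/(((δ:ℝ)-1)*((d:ℝ)-1)) - (γ:ℝ)/((δ:ℝ)*(d:ℝ))))*ε
          = (1/((d:ℝ)-1) + (γ:ℝ)/(((δ:ℝ)-1)*((d:ℝ)-1)))*ε := by ring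
      rw [hB2def]
      linarith
    -- pass to the limit
    have t0 := hlim x hx
    have t1 : Filter.Tendsto (fun n => ‖(Φ n x).1 - x.1‖) Filter.atTop
        (nhds ‖(Φlim x).1 - x.1‖) :=
      (((continuous_fst.tendsto _).comp t0).sub_const x.1).norm
    have t2 : Filter.Tendsto (fun n => ‖(Φ n x).2 - x.2‖) Filter.atTop
        (nhds ‖(Φlim x).2 - x.2‖) :=
      (((continuous_snd.tendsto _).comp t0).sub_const x.2).norm
    have L1 : ‖(Φlim x).1 - x.1‖ ≤ B1 := le_of_tendsto' t1 (fun n => (claimA n).trans (hA n))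
    have L2 : ‖(Φlim x).2 - x.2‖ ≤ B2 := le_of_tendsto' t2 (fun n => (claimB n).trans (hB n))
    apply max_lt
    · calc ‖(Φlim x).1 - x.1‖ ≤ B1 := L1
        _ < (1/((δ:ℝ)-1))*ε := hB1lt
        _ ≤ _ := mul_le_mul_of_nonneg_right (le_max_left _ _) hε.le
    · calc ‖(Φlim x).2 - x.2‖ ≤ B2 := L2
        _ < (1/((d:ℝ)-1) + (γ:ℝ)/(((δ:ℝ)-1)*((d:ℝ)-1)))*ε := hB2lt
        _ ≤ _ := mul_le_mul_of_nonneg_right (le_max_right _ _) hε.le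
  constructor
  · intro hne x hx
    have hcast : (δ:ℝ) - (d:ℝ) ≠ 0 := sub_ne_zero.2 (by exact_mod_cast hne)
    have e : (γ:ℝ)/((δ:ℝ)-(d:ℝ)) * (1/((d:ℝ)-1) - 1/((δ:ℝ)-1))
        = (γ:ℝ)/(((δ:ℝ)-1)*((d:ℝ)-1)) := by
      rw [div_sub_div _ _ (ne_of_gt hd1) (ne_of_gt hδ1), div_mul_div_comm,
        div_eq_div_iff (mul_ne_zero hcast (mul_ne_zero (ne_of_gt hd1) (ne_of_gt hδ1)))
          (mul_ne_zero (ne_of_gt hδ1) (ne_of_gt hd1))]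
      ring
    rw [e]
    exact main x hx
  · intro heq x hx
    subst heq
    have e2 : (1/((δ:ℝ)-1) + (γ:ℝ)/((δ:ℝ)-1)^2)
        = max (1/((δ:ℝ)-1)) (1/((δ:ℝ)-1) + (γ:ℝ)/(((δ:ℝ)-1)*((δ:ℝ)-1))) := by
      rw [max_eq_right (le_add_of_nonneg_right (by positivity)), sq]
    rw [e2]
    exact main x hx
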